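/- For odd n ≥ 3: among all graphs on n vertices, the minimum number of edges of a graph with matching preclusion number exactly 2 is n − 1. -/

import Mathlib

open SimpleGraph

/-- An almost-perfect matching: a matching covering all vertices except exactly one. -/
def SimpleGraph.Subgraph.IsAlmostPerfectMatching {V : Type*} {G : SimpleGraph V}
    (M : G.Subgraph) : Prop :=
  M.IsMatching ∧ ∃ v : V, M.verts = {v}ᶜ

/-- `G` has a perfect matching or an almost-perfect matching. -/
def SimpleGraph.HasGoodMatching {V : Type*} (G : SimpleGraph V) : Prop :=
  (∃ M : G.Subgraph, M.IsPerfectMatching) ∨ (∃ M : G.Subgraph, M.IsAlmostPerfectMatching)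

/-- The matching preclusion number of `G`. -/
noncomputable def SimpleGraph.mp {V : Type*} [Fintype V] (G : SimpleGraph V) : ℕ :=
  sInf { k | ∃ F : Finset (Sym2 V), ↑F ⊆ G.edgeSet ∧ F.card = k ∧
    ¬ (G.deleteEdges ↑F).HasGoodMatching }

private lemma even_ncard_of_closed {V : Type*} [Fintype V] {G : SimpleGraph V} {M : G.Subgraph}
    (hM : M.IsMatching) {A : Set V} (hcl : ∀ a ∈ A, ∀ b, G.Adj a b → b ∈ A)
    (hA : A ⊆ M.verts) : Even A.ncard := by
  classical
  have hmatch : (M.induce A).IsMatching := by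
    intro v hv
    obtain ⟨w, hw, hu⟩ := hM (hA hv)
    exact ⟨w, ⟨hv, hcl v hv w (M.adj_sub hw), hw⟩, fun y hy => hu y hy.2.2⟩
  have h := hmatch.even_card
  have hv : (M.induce A).verts = A := rfl
  rw [Set.ncard_eq_toFinset_card' A]
  convert h using 2
  exact Set.toFinset_congr hv.symm

private lemma no_good_two_closed {V : Type*} [Fintype V] {G : SimpleGraph V} {A B : Set V}
    (hd : Disjoint A B) (hA : Odd A.ncard) (hB : Odd B.ncard)
    (hclA : ∀ a ∈ A, ∀ b, G.Adj a b → b ∈ A) (hclB : ∀ a ∈ B, ∀ b, G.Adj a b → b ∈ B) :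
    ¬ G.HasGoodMatching := by
  rintro (⟨M, hM⟩ | ⟨M, hM, v, hv⟩)
  · exact (Nat.not_even_iff_odd.2 hA)
      (even_ncard_of_closed hM.1 hclA (by rw [hM.2.verts_eq_univ]; exact Set.subset_univ A))
  · by_cases hvA : v ∈ A
    · have hvB : v ∉ B := Set.disjoint_left.mp hd hvA
      have : B ⊆ M.verts := by
        rw [hv]; intro b hb hbv
        exact hvB (by simpa [Set.mem_singleton_iff.mp hbv] using hb)
      exact (Nat.not_even_iff_odd.2 hB) (even_ncard_of_closed hM hclB this)
    · have : A ⊆ M.verts := by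
        rw [hv]; intro a ha hav
        exact hvA (by simpa [Set.mem_singleton_iff.mp hav] using ha)
      exact (Nat.not_even_iff_odd.2 hA) (even_ncard_of_closed hM hclA this)

private lemma exists_next {V : Type*} {G : SimpleGraph V} {r w : V}
    (hrch : G.Reachable w r) (hw : w ≠ r) :
    ∃ u, G.Adj w u ∧ G.dist u r < G.dist w r := by
  obtain ⟨p, hp⟩ := hrch.exists_walk_length_eq_dist
  have hpos : 0 < p.length := by
    rcases Nat.eq_zero_or_pos p.length with h | h
    · exact absurd (Walk.eq_of_length_eq_zero h) hw
    · exact h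
  have hnil : ¬ p.Nil := Walk.not_nil_iff_lt_length.mpr hpos
  refine ⟨p.getVert 1, p.adj_snd hnil, ?_⟩
  have h1 : G.dist (p.getVert 1) r ≤ p.tail.length := dist_le _
  have h2 : p.tail.length + 1 = p.length := Walk.length_tail_add_one hnil
  omega

private lemma comp_bound {V : Type*} [Fintype V] [DecidableEq V] (G : SimpleGraph V)
    [DecidableEq G.ConnectedComponent] [DecidableRel G.Adj] (c : G.ConnectedComponent) :
    (Finset.univ.filter fun v => G.connectedComponentMk v = c).card ≤
      (G.edgeFinset.filter fun e => G.connectedComponentMk e.out.1 = c).card + 1 ∧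
    ((G.edgeFinset.filter fun e => G.connectedComponentMk e.out.1 = c).card + 1 ≤
        (Finset.univ.filter fun v => G.connectedComponentMk v = c).card →
      2 ≤ (Finset.univ.filter fun v => G.connectedComponentMk v = c).card →
      ∃ u e, G.connectedComponentMk u = c ∧ e ∈ G.edgeSet ∧ ∀ b, G.Adj u b → s(u, b) = e) := by
  classical
  obtain ⟨r, hr⟩ := c.exists_rep
  have hrc : G.connectedComponentMk r = c := hr
  set Sc := Finset.univ.filter fun v => G.connectedComponentMk v = c with hSc
  set Ec := G.edgeFinset.filter fun e => G.connectedComponentMk e.out.1 = c with hEc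
  have hreach : ∀ w, G.connectedComponentMk w = c → G.Reachable w r := by
    intro w hw
    exact ConnectedComponent.eq.mp (hw.trans hrc.symm)
  have htot : ∀ w : V, ∃ u : V,
      (G.connectedComponentMk w = c ∧ w ≠ r) → (G.Adj w u ∧ G.dist u r < G.dist w r) := by
    intro w
    by_cases h : G.connectedComponentMk w = c ∧ w ≠ r
    · obtain ⟨u, hu⟩ := exists_next (hreach w h.1) h.2
      exact ⟨u, fun _ => hu⟩
    · exact ⟨w, fun hh => absurd hh h⟩
  choose nxt hnxt using htot
  have hfmem : ∀ w ∈ Sc.erase r, s(w, nxt w) ∈ Ec := by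
    intro w hw
    rw [Finset.mem_erase] at hw
    obtain ⟨hwr, hwc⟩ := hw
    rw [hSc, Finset.mem_filter] at hwc
    obtain ⟨hadj, -⟩ := hnxt w ⟨hwc.2, hwr⟩
    rw [hEc, Finset.mem_filter, mem_edgeFinset]
    refine ⟨hadj, ?_⟩
    have hmem := Sym2.out_fst_mem s(w, nxt w)
    rw [Sym2.mem_iff] at hmem
    have hnc : G.connectedComponentMk (nxt w) = c := by
      rw [← hwc.2]
      exact ConnectedComponent.eq.mpr hadj.symm.reachable
    rcases hmem with h | h <;> rw [h]
    · exact hwc.2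
    · exact hnc
  have hinj : Set.InjOn (fun w => s(w, nxt w)) (Sc.erase r) := by
    intro w1 hw1 w2 hw2 heq
    simp only [Finset.coe_erase, Set.mem_diff, Finset.mem_coe, Finset.mem_filter,
      Set.mem_singleton_iff, hSc] at hw1 hw2
    have h1 := hnxt w1 ⟨hw1.1.2, hw1.2⟩
    have h2 := hnxt w2 ⟨hw2.1.2, hw2.2⟩
    simp only [Sym2.eq_iff] at heq
    rcases heq with ⟨h, -⟩ | ⟨ha, hb⟩
    · exact h
    · rw [hb] at h1; rw [← ha] at h2; omega
  have hcard : (Sc.erase r).card ≤ Ec.card :=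
    Finset.card_le_card_of_injOn _ hfmem hinj
  have hrS : r ∈ Sc := by rw [hSc, Finset.mem_filter]; exact ⟨Finset.mem_univ r, hrc⟩
  have herase : (Sc.erase r).card + 1 = Sc.card := Finset.card_erase_add_one hrS
  constructor
  · omega
  · intro hle h2
    have hsurj := Finset.surj_on_of_inj_on_of_card_le (s := Sc.erase r) (t := Ec)
      (fun w _ => s(w, nxt w)) (fun a ha => hfmem a ha) (fun a₁ a₂ h₁ h₂ h => hinj h₁ h₂ h)
      (by omega)
    obtain ⟨u, huS, hmax⟩ := Finset.exists_max_image Sc (fun w => G.dist w r) ⟨r, hrS⟩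
    have huc : G.connectedComponentMk u = c := (Finset.mem_filter.mp huS).2
    have hur : u ≠ r := by
      obtain ⟨a, ha, b, hb, hab⟩ := Finset.one_lt_card.mp h2
      have hx : ∃ x ∈ Sc, x ≠ r := by
        by_cases har : a = r
        · exact ⟨b, hb, by rw [← har]; exact fun h => hab h.symm⟩
        · exact ⟨a, ha, har⟩
      obtain ⟨x, hxS, hxr⟩ := hx
      have hxc : G.connectedComponentMk x = c := (Finset.mem_filter.mp hxS).2
      have hpos : 0 < G.dist x r := (hreach x hxc).pos_dist_of_ne hxr
      have hmx := hmax x hxS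
      intro hur'
      rw [hur'] at hmx
      simp only [SimpleGraph.dist_self] at hmx
      omega
    have hu := hnxt u ⟨huc, hur⟩
    refine ⟨u, s(u, nxt u), huc, hu.1, ?_⟩
    intro b hb
    have hbc : G.connectedComponentMk b = c := by
      rw [← huc]; exact ConnectedComponent.eq.mpr hb.symm.reachable
    have hedge : s(u, b) ∈ Ec := by
      rw [hEc, Finset.mem_filter, mem_edgeFinset]
      refine ⟨hb, ?_⟩
      have hmem := Sym2.out_fst_mem s(u, b)
      rw [Sym2.mem_iff] at hmem
      rcases hmem with h | h <;> rw [h]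
      · exact huc
      · exact hbc
    obtain ⟨w, hwmem, hweq⟩ := hsurj _ hedge
    obtain ⟨hwmem2, -⟩ := Finset.mem_erase.mp hwmem
    have hwc : G.connectedComponentMk w = c := (Finset.mem_filter.mp (Finset.mem_of_mem_erase hwmem)).2
    have hw := hnxt w ⟨hwc, hwmem2⟩
    rw [Sym2.eq_iff] at hweq
    rcases hweq with ⟨h1, h2⟩ | ⟨h1, h2⟩
    · rw [h2, ← h1]
    · exfalso
      have hbS : b ∈ Sc := Finset.mem_filter.mpr ⟨Finset.mem_univ b, hbc⟩
      have hmb := hmax b hbS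
      have hd := hw.2
      rw [← h1] at hd
      rw [h2] at hmb
      omega

private def pfn (m x : ℕ) : ℕ :=
  if x < m then (if x % 2 = 0 then x + 1 else x - 1)
  else (if (x - m) % 2 = 1 then x + 1 else x - 1)

private lemma pfn_cases (m x : ℕ) :
    (x < m ∧ x % 2 = 0 ∧ pfn m x = x + 1) ∨ (x < m ∧ x % 2 = 1 ∧ pfn m x + 1 = x) ∨
    (¬ x < m ∧ (x - m) % 2 = 1 ∧ pfn m x = x + 1) ∨
    (¬ x < m ∧ (x - m) % 2 = 0 ∧ pfn m x = x - 1) := by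
  unfold pfn
  split_ifs <;> omega

set_option maxHeartbeats 1000000 in
private lemma pfn_spec {n m x : ℕ} (hn : n % 2 = 1) (hm : m % 2 = 0) (hmn : m ≤ n - 1)
    (hx : x < n) (hxm : x ≠ m) :
    pfn m x < n ∧ pfn m x ≠ m ∧ pfn m (pfn m x) = x ∧
      ((x % 2 = 0 ∧ x < m ∧ pfn m x = x + 1) ∨ (x % 2 = 1 ∧ x < m ∧ pfn m x + 1 = x) ∨
       (m < x ∧ (x - m) % 2 = 1 ∧ pfn m x = x + 1) ∨
       (m < x ∧ (x - m) % 2 = 0 ∧ pfn m x + 1 = x)) := by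
  have h1 := pfn_cases m x
  have h2 := pfn_cases m (pfn m x)
  rcases h1 with ⟨ha, hb, hc⟩ | ⟨ha, hb, hc⟩ | ⟨ha, hb, hc⟩ | ⟨ha, hb, hc⟩ <;>
    rcases h2 with ⟨hd, he, hf⟩ | ⟨hd, he, hf⟩ | ⟨hd, he, hf⟩ | ⟨hd, he, hf⟩ <;>
    omega

private def pM {n : ℕ} (H : SimpleGraph (Fin n)) (m : ℕ)
    (hadj : ∀ a b : Fin n, a.val ≠ m → b.val = pfn m a.val → H.Adj a b) : H.Subgraph where
  verts := {v : Fin n | v.val ≠ m}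
  Adj a b := a.val ≠ m ∧ b.val ≠ m ∧ b.val = pfn m a.val ∧ a.val = pfn m b.val
  adj_sub h := hadj _ _ h.1 h.2.2.1
  edge_vert h := h.1
  symm := ⟨fun a b h => ⟨h.2.1, h.1, h.2.2.2, h.2.2.1⟩⟩

private lemma good_of {n m : ℕ} (H : SimpleGraph (Fin n)) (hn : n % 2 = 1) (hm : m % 2 = 0)
    (hmn : m ≤ n - 1)
    (hadj : ∀ a b : Fin n, a.val ≠ m → b.val = pfn m a.val → H.Adj a b) :
    H.HasGoodMatching := by
  have hpos : 0 < n := by omega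
  refine Or.inr ⟨pM H m hadj, ?_, ⟨m, by omega⟩, ?_⟩
  · intro v hv
    have hv' : v.val ≠ m := hv
    obtain ⟨h1, h2, h3, -⟩ := pfn_spec hn hm hmn v.isLt hv'
    refine ⟨⟨pfn m v.val, h1⟩, ⟨hv', h2, rfl, h3.symm⟩, ?_⟩
    intro y hy
    exact Fin.ext hy.2.2.1
  · ext x
    simp only [pM, Set.mem_setOf_eq, Set.mem_compl_iff, Set.mem_singleton_iff, Fin.ext_iff]

theorem stmt14 (n : ℕ) (hn : Odd n) (h3 : 3 ≤ n) :
    IsLeast { m | ∃ G : SimpleGraph (Fin n), G.mp = 2 ∧ G.edgeSet.ncard = m } (n - 1) := by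
  classical
  have hn1 : n % 2 = 1 := Nat.odd_iff.mp hn
  constructor
  · -- membership: the path graph
    set P := pathGraph n with hP
    have hedge_char : ∀ e ∈ P.edgeSet, ∃ a b : Fin n, e = s(a, b) ∧ (a : ℕ) + 1 = (b : ℕ) := by
      intro e he
      induction e with
      | _ x y =>
        rw [mem_edgeSet, hP, pathGraph_adj] at he
        rcases he with h | h
        · exact ⟨x, y, rfl, h⟩
        · exact ⟨y, x, Sym2.eq_swap, h⟩
    have hgood : ∀ F : Finset (Sym2 (Fin n)), ↑F ⊆ P.edgeSet → F.card ≤ 1 →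
        (P.deleteEdges ↑F).HasGoodMatching := by
      intro F hF hcard
      rcases Nat.le_one_iff_eq_zero_or_eq_one.mp hcard with h0 | h1
      · rw [Finset.card_eq_zero] at h0
        subst h0
        rw [Finset.coe_empty, deleteEdges_empty]
        refine good_of P hn1 (by omega) le_rfl ?_
        intro a b ha hb
        obtain ⟨-, -, -, hd⟩ := pfn_spec (n := n) hn1 (by omega) le_rfl a.isLt ha
        rw [hP, pathGraph_adj]
        omega
      · obtain ⟨e, rfl⟩ := Finset.card_eq_one.mp h1
        have he : e ∈ P.edgeSet := hF (by simp)
        obtain ⟨a0, b0, rfl, hab⟩ := hedge_char e he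
        have hb0 : (b0 : ℕ) < n := b0.isLt
        by_cases hpar : (a0 : ℕ) % 2 = 0
        · refine good_of _ hn1 hpar (by omega) ?_
          intro a b ha hb
          obtain ⟨-, hbm, -, hd⟩ := pfn_spec (n := n) hn1 hpar (by omega) a.isLt ha
          rw [← hb] at hbm
          rw [deleteEdges_adj]
          constructor
          · rw [hP, pathGraph_adj]; omega
          · simp only [Finset.coe_singleton, Set.mem_singleton_iff, Sym2.eq_iff]
            rintro (⟨h1, h2⟩ | ⟨h1, h2⟩) <;>
              [(rw [Fin.ext_iff] at h1 h2); (rw [Fin.ext_iff] at h1 h2)] <;> omega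
        · refine good_of _ hn1 (m := n - 1) (by omega) le_rfl ?_
          intro a b ha hb
          obtain ⟨-, hbm, -, hd⟩ := pfn_spec (n := n) hn1 (by omega) le_rfl a.isLt ha
          rw [← hb] at hbm
          rw [deleteEdges_adj]
          constructor
          · rw [hP, pathGraph_adj]; omega
          · simp only [Finset.coe_singleton, Set.mem_singleton_iff, Sym2.eq_iff]
            rintro (⟨h1, h2⟩ | ⟨h1, h2⟩) <;>
              [(rw [Fin.ext_iff] at h1 h2); (rw [Fin.ext_iff] at h1 h2)] <;> omega
    have hv0 : (0 : ℕ) < n := by omega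
    have hv1 : (1 : ℕ) < n := by omega
    have hv2 : (2 : ℕ) < n := by omega
    set v0 : Fin n := ⟨0, hv0⟩
    set v1 : Fin n := ⟨1, hv1⟩
    set v2 : Fin n := ⟨2, hv2⟩
    set F2 : Finset (Sym2 (Fin n)) := {s(v0, v1), s(v1, v2)} with hF2
    have hval0 : (v0 : ℕ) = 0 := rfl
    have hval1 : (v1 : ℕ) = 1 := rfl
    have hval2 : (v2 : ℕ) = 2 := rfl
    have hne12 : s(v0, v1) ≠ s(v1, v2) := by
      intro h
      rw [Sym2.eq_iff] at h
      rcases h with ⟨h1, h2⟩ | ⟨h1, h2⟩ <;> rw [Fin.ext_iff] at h1 h2 <;> omega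
    have hF2card : F2.card = 2 := by
      rw [hF2, Finset.card_insert_of_notMem (by simpa using hne12), Finset.card_singleton]
    have hF2sub : ↑F2 ⊆ P.edgeSet := by
      intro e hee
      simp only [hF2, Finset.coe_insert, Finset.coe_singleton, Set.mem_insert_iff,
        Set.mem_singleton_iff] at hee
      rcases hee with rfl | rfl <;> rw [mem_edgeSet, hP, pathGraph_adj] <;> simp [v0, v1, v2]
    have hF2mem : ∀ x y : Fin n, ((x : ℕ) = 0 ∧ (y : ℕ) = 1) ∨ ((x : ℕ) = 1 ∧ (y : ℕ) = 0)
        ∨ ((x : ℕ) = 1 ∧ (y : ℕ) = 2) ∨ ((x : ℕ) = 2 ∧ (y : ℕ) = 1) → s(x, y) ∈ (↑F2 : Set (Sym2 (Fin n))) := by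
      intro x y h
      simp only [hF2, Finset.coe_insert, Finset.coe_singleton, Set.mem_insert_iff,
        Set.mem_singleton_iff, Sym2.eq_iff]
      rcases h with ⟨h1, h2⟩ | ⟨h1, h2⟩ | ⟨h1, h2⟩ | ⟨h1, h2⟩ <;>
        simp [Fin.ext_iff, v0, v1, v2, h1, h2]
    have hbad2 : ¬ (P.deleteEdges ↑F2).HasGoodMatching := by
      apply no_good_two_closed (A := {v0}) (B := {v1})
      · rw [Set.disjoint_singleton_left, Set.mem_singleton_iff]
        intro h; rw [Fin.ext_iff] at h; simp [v0, v1] at h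
      · rw [Set.ncard_singleton]; exact odd_one
      · rw [Set.ncard_singleton]; exact odd_one
      · intro a ha b hadj
        rw [Set.mem_singleton_iff] at ha; subst ha
        rw [deleteEdges_adj] at hadj
        obtain ⟨hPadj, hmem⟩ := hadj
        rw [hP, pathGraph_adj] at hPadj
        exfalso
        apply hmem
        apply hF2mem
        have : (v0 : ℕ) = 0 := rfl
        omega
      · intro a ha b hadj
        rw [Set.mem_singleton_iff] at ha; subst ha
        rw [deleteEdges_adj] at hadj
        obtain ⟨hPadj, hmem⟩ := hadj
        rw [hP, pathGraph_adj] at hPadj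
        exfalso
        apply hmem
        apply hF2mem
        have : (v1 : ℕ) = 1 := rfl
        omega
    have h2S : 2 ∈ { k | ∃ F : Finset (Sym2 (Fin n)), ↑F ⊆ P.edgeSet ∧ F.card = k ∧
        ¬ (P.deleteEdges ↑F).HasGoodMatching } := ⟨F2, hF2sub, hF2card, hbad2⟩
    have hmp2 : P.mp = 2 := by
      unfold SimpleGraph.mp
      refine le_antisymm (Nat.sInf_le h2S) (le_csInf ⟨2, h2S⟩ ?_)
      rintro k ⟨F, hsub, hcard, hbadk⟩
      by_contra hk
      exact hbadk (hgood F hsub (by omega))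
    refine ⟨P, hmp2, ?_⟩
    · -- edge count
      have hnn : ∀ i : Fin (n - 1), (i : ℕ) < n := fun i => by have := i.isLt; omega
      have hnn2 : ∀ i : Fin (n - 1), (i : ℕ) + 1 < n := fun i => by have := i.isLt; omega
      set g : Fin (n - 1) → Sym2 (Fin n) := fun i => s(⟨i, hnn i⟩, ⟨i + 1, hnn2 i⟩) with hg
      have hrange : P.edgeSet = Set.range g := by
        ext e
        constructor
        · intro he
          obtain ⟨a, b, rfl, hab⟩ := hedge_char e he
          have hb := b.isLt
          refine ⟨⟨a, by omega⟩, ?_⟩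
          rw [hg]
          simp only [Sym2.eq_iff, Fin.ext_iff, Fin.val_mk]
          tauto
        · rintro ⟨i, rfl⟩
          rw [mem_edgeSet, hP, pathGraph_adj]
          simp
      rw [hrange, ← Set.image_univ, Set.ncard_image_of_injective _ ?_, Set.ncard_univ]
      · simp
      · intro i j hij
        rw [hg] at hij
        simp only [Sym2.eq_iff, Fin.ext_iff] at hij
        rw [Fin.ext_iff]
        omega
  · -- lower bound
    rintro m ⟨G, hmp, rfl⟩
    unfold SimpleGraph.mp at hmp
    have hSle : ∀ k ∈ { k | ∃ F : Finset (Sym2 (Fin n)), ↑F ⊆ G.edgeSet ∧ F.card = k ∧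
        ¬ (G.deleteEdges ↑F).HasGoodMatching }, 2 ≤ k := fun k hk => hmp ▸ Nat.sInf_le hk
    have hGood : G.HasGoodMatching := by
      by_contra hng
      have h0 : 0 ∈ { k | ∃ F : Finset (Sym2 (Fin n)), ↑F ⊆ G.edgeSet ∧ F.card = k ∧
          ¬ (G.deleteEdges ↑F).HasGoodMatching } :=
        ⟨∅, by simp, Finset.card_empty, by rwa [Finset.coe_empty, deleteEdges_empty]⟩
      exact absurd (hSle 0 h0) (by omega)
    have hOne : ∀ e ∈ G.edgeSet, (G.deleteEdges {e}).HasGoodMatching := by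
      intro e he
      by_contra hng
      have h1 : 1 ∈ { k | ∃ F : Finset (Sym2 (Fin n)), ↑F ⊆ G.edgeSet ∧ F.card = k ∧
          ¬ (G.deleteEdges ↑F).HasGoodMatching } :=
        ⟨{e}, by simpa using he, Finset.card_singleton e, by rwa [Finset.coe_singleton]⟩
      exact absurd (hSle 1 h1) (by omega)
    -- component analysis
    have hsum_v : ∑ c : G.ConnectedComponent,
        (Finset.univ.filter fun v => G.connectedComponentMk v = c).card = n := by
      rw [← Finset.card_eq_sum_card_fiberwise (fun x _ => Finset.mem_univ (G.connectedComponentMk x)),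
        Finset.card_univ, Fintype.card_fin]
    have hsum_e : ∑ c : G.ConnectedComponent,
        (G.edgeFinset.filter fun e => G.connectedComponentMk e.out.1 = c).card
        = G.edgeFinset.card := by
      rw [← Finset.card_eq_sum_card_fiberwise
        (fun (x : Sym2 (Fin n)) _ => Finset.mem_univ (G.connectedComponentMk x.out.1))]
    have hclosed : ∀ (c : G.ConnectedComponent) (a : Fin n), G.connectedComponentMk a = c →
        ∀ b, G.Adj a b → G.connectedComponentMk b = c := by
      intro c a ha b hab
      rw [← ha]
      exact ConnectedComponent.eq.mpr hab.symm.reachable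
    have hodd_ex : ∃ c : G.ConnectedComponent,
        Odd (Finset.univ.filter fun v => G.connectedComponentMk v = c).card := by
      by_contra hng
      push_neg at hng
      have : Even (∑ c : G.ConnectedComponent,
          (Finset.univ.filter fun v => G.connectedComponentMk v = c).card) :=
        Finset.even_sum _ (fun c _ => Nat.not_odd_iff_even.mp (hng c))
      rw [hsum_v] at this
      exact (Nat.not_even_iff_odd.mpr hn) this
    obtain ⟨c₀, hc₀⟩ := hodd_ex
    have huniq : ∀ c : G.ConnectedComponent,
        Odd (Finset.univ.filter fun v => G.connectedComponentMk v = c).card → c = c₀ := by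
      intro c hc
      by_contra hne
      refine no_good_two_closed (G := G)
        (A := ↑(Finset.univ.filter fun v => G.connectedComponentMk v = c))
        (B := ↑(Finset.univ.filter fun v => G.connectedComponentMk v = c₀)) ?_ ?_ ?_ ?_ ?_ hGood
      · rw [Set.disjoint_left]
        intro a ha hb
        simp only [Finset.coe_filter, Finset.mem_univ, true_and, Set.mem_setOf_eq] at ha hb
        exact hne (by rw [← ha, hb])
      · rwa [Set.ncard_coe_finset]
      · rwa [Set.ncard_coe_finset]
      · intro a ha b hab
        simp only [Finset.coe_filter, Finset.mem_univ, true_and, Set.mem_setOf_eq] at ha ⊢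
        exact hclosed c a ha b hab
      · intro a ha b hab
        simp only [Finset.coe_filter, Finset.mem_univ, true_and, Set.mem_setOf_eq] at ha ⊢
        exact hclosed c₀ a ha b hab
    have heven_bound : ∀ c : G.ConnectedComponent, c ≠ c₀ →
        (Finset.univ.filter fun v => G.connectedComponentMk v = c).card ≤
        (G.edgeFinset.filter fun e => G.connectedComponentMk e.out.1 = c).card := by
      intro c hne
      by_contra hgt
      push_neg at hgt
      have hcb := comp_bound G c
      have h2c : 2 ≤ (Finset.univ.filter fun v => G.connectedComponentMk v = c).card := by
        obtain ⟨r, hr⟩ := c.exists_rep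
        have hrS : r ∈ Finset.univ.filter fun v => G.connectedComponentMk v = c :=
          Finset.mem_filter.mpr ⟨Finset.mem_univ r, hr⟩
        have h1 : 1 ≤ (Finset.univ.filter fun v => G.connectedComponentMk v = c).card :=
          Finset.card_pos.mpr ⟨r, hrS⟩
        have hev : Even (Finset.univ.filter fun v => G.connectedComponentMk v = c).card := by
          rw [← Nat.not_odd_iff_even]
          exact fun h => hne (huniq c h)
        rw [Nat.even_iff] at hev
        omega
      obtain ⟨u, e, huc, he, hleaf⟩ := hcb.2 (by omega) h2c
      refine no_good_two_closed (G := G.deleteEdges {e}) (A := {u})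
        (B := ↑(Finset.univ.filter fun v => G.connectedComponentMk v = c₀)) ?_ ?_ ?_ ?_ ?_
        (hOne e he)
      · rw [Set.disjoint_singleton_left]
        simp only [Finset.coe_filter, Finset.mem_univ, true_and, Set.mem_setOf_eq]
        rw [huc]
        exact hne
      · rw [Set.ncard_singleton]; exact odd_one
      · rwa [Set.ncard_coe_finset]
      · intro a ha b hab
        rw [Set.mem_singleton_iff] at ha
        subst ha
        rw [deleteEdges_adj] at hab
        exact absurd (hleaf b hab.1) (by simpa using hab.2)
      · intro a ha b hab
        rw [deleteEdges_adj] at hab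
        simp only [Finset.coe_filter, Finset.mem_univ, true_and, Set.mem_setOf_eq] at ha ⊢
        exact hclosed c₀ a ha b hab.1
    -- final count
    have hc₀mem : c₀ ∈ (Finset.univ : Finset G.ConnectedComponent) := Finset.mem_univ c₀
    have hsplit_v := Finset.add_sum_erase Finset.univ
      (fun c => (Finset.univ.filter fun v => G.connectedComponentMk v = c).card) hc₀mem
    have hsplit_e := Finset.add_sum_erase Finset.univ
      (fun c => (G.edgeFinset.filter fun e => G.connectedComponentMk e.out.1 = c).card) hc₀mem
    have hbound_rest : ∑ c ∈ Finset.univ.erase c₀,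
        (Finset.univ.filter fun v => G.connectedComponentMk v = c).card ≤
        ∑ c ∈ Finset.univ.erase c₀,
        (G.edgeFinset.filter fun e => G.connectedComponentMk e.out.1 = c).card :=
      Finset.sum_le_sum fun c hc => heven_bound c (Finset.ne_of_mem_erase hc)
    have hbound_c₀ := (comp_bound G c₀).1
    beta_reduce at hsplit_v hsplit_e
    have hfinal : n ≤ G.edgeFinset.card + 1 := by omega
    have hcount : G.edgeSet.ncard = G.edgeFinset.card := by
      rw [← coe_edgeFinset, Set.ncard_coe_finset]
    rw [hcount]
    omega
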